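/- Let L be a finite meet-distributive lattice and let a₁, ..., a_k be pairwise incomparable elements with a_i ∧ a_j = 0 for all i ≠ j. Then length(↓a₁) + ... + length(↓a_k) ≤ length(L), where ↓a denotes the principal ideal of a. -/

import Mathlib

open scoped Classical

/-- A subset `X` of a lattice with `⊥` is CD-independent if any two
incomparable members meet to `⊥`. -/
def CDIndep {L : Type*} [Lattice L] [OrderBot L] (X : Set L) : Prop :=
  ∀ x ∈ X, ∀ y ∈ X, ¬ x ≤ y → ¬ y ≤ x → x ⊓ y = ⊥

/-- `X` is a maximal CD-independent subset of `S` (within the ambient lattice). -/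
def MaxCDIndepIn {L : Type*} [Lattice L] [OrderBot L] (S X : Set L) : Prop :=
  X ⊆ S ∧ CDIndep X ∧ ∀ Y ⊆ S, CDIndep Y → X ⊆ Y → Y = X

/-- `X` is a maximal CD-independent subset of the whole lattice. -/
def MaxCDIndep {L : Type*} [Lattice L] [OrderBot L] (X : Set L) : Prop :=
  MaxCDIndepIn Set.univ X

/-- The length of the subposet `S`: the size of a longest chain contained in `S`, minus 1. -/
noncomputable def chainLen {L : Type*} [Lattice L] [Fintype L] (S : Set L) : ℕ :=
  ((Finset.univ.powerset.filter
      fun C : Finset L => ↑C ⊆ S ∧ IsChain (· ≤ ·) (C : Set L)).sup Finset.card) - 1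

/-- The length of the finite lattice `L`. -/
noncomputable def latLen (L : Type*) [Lattice L] [Fintype L] : ℕ :=
  chainLen (Set.univ : Set L)

/-- `u_*`: the meet of all lower covers of `u`. -/
noncomputable def lowstar {L : Type*} [Lattice L] [Fintype L] [BoundedOrder L] (u : L) : L :=
  (Finset.univ.filter fun v => v ⋖ u).inf id

/-- `L` is meet-distributive if every interval `[u_*, u]` (for `u ≠ ⊥`) is distributive. -/
def MeetDistrib (L : Type*) [Lattice L] [Fintype L] [BoundedOrder L] : Prop :=
  ∀ u : L, u ≠ ⊥ → ∀ x ∈ Set.Icc (lowstar u) u, ∀ y ∈ Set.Icc (lowstar u) u,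
    ∀ z ∈ Set.Icc (lowstar u) u, x ⊓ (y ⊔ z) = (x ⊓ y) ⊔ (x ⊓ z)

/-- Lower semimodularity: `a ⋖ a ⊔ b` implies `a ⊓ b ⋖ b`. -/
def LowerSemimodular (L : Type*) [Lattice L] : Prop :=
  ∀ a b : L, a ⋖ a ⊔ b → a ⊓ b ⋖ b

/-- The number of atoms of `L`. -/
noncomputable def atomsCard (L : Type*) [Lattice L] [OrderBot L] : ℕ :=
  {a : L | IsAtom a}.ncard

/-- `b` is the pseudocomplement of `a`: the largest element meeting `a` to `⊥`. -/
def PseudoCompl {L : Type*} [Lattice L] [OrderBot L] (a b : L) : Prop :=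
  a ⊓ b = ⊥ ∧ ∀ x, a ⊓ x = ⊥ → x ≤ b

/-- `(a, b)` is a pseudocomplemented pair: each is the pseudocomplement of the other. -/
def PseudoPair {L : Type*} [Lattice L] [OrderBot L] (a b : L) : Prop :=
  PseudoCompl a b ∧ PseudoCompl b a

/-- An element is meet-irreducible if it has exactly one cover. -/
def MeetIrred {L : Type*} [Lattice L] (a : L) : Prop :=
  ∃! b, a ⋖ b

/-- `L` is dually slim: no three-element antichain of meet-irreducible elements. -/
def DuallySlim (L : Type*) [Lattice L] : Prop :=
  ¬ ∃ x y z : L, MeetIrred x ∧ MeetIrred y ∧ MeetIrred z ∧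
    ¬ x ≤ y ∧ ¬ y ≤ x ∧ ¬ x ≤ z ∧ ¬ z ≤ x ∧ ¬ y ≤ z ∧ ¬ z ≤ y

set_option linter.unusedSectionVars false
set_option linter.unusedVariables false


section Dev
variable {L : Type*} [Lattice L] [Fintype L] [BoundedOrder L]

lemma exists_le_covby {z y : L} (h : z < y) : ∃ m, z ≤ m ∧ m ⋖ y := by
  obtain ⟨m, ⟨hzm, hmy⟩, hmax⟩ := Set.Finite.exists_maximalFor id {w : L | z ≤ w ∧ w < y}
    (Set.toFinite _) ⟨z, le_rfl, h⟩
  refine ⟨m, hzm, hmy, fun c hmc hcy => ?_⟩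
  exact absurd (le_antisymm hmc.le (hmax ⟨hzm.trans hmc.le, hcy⟩ hmc.le)) hmc.ne

lemma lowstar_le {m y : L} (h : m ⋖ y) : lowstar y ≤ m := by
  have : m ∈ Finset.univ.filter fun v => v ⋖ y := by simp [h]
  exact Finset.inf_le this

lemma covby_not_le {u v y : L} (hu : u ⋖ y) (hv : v ⋖ y) (huv : u ≠ v) : ¬ v ≤ u := by
  intro hle
  exact hv.2 (lt_of_le_of_ne hle huv.symm) hu.1

lemma covby_sup_eq {u v y : L} (hu : u ⋖ y) (hv : v ⋖ y) (huv : u ≠ v) : u ⊔ v = y := by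
  have h1 : u < u ⊔ v := left_lt_sup.2 (covby_not_le hu hv huv)
  have h2 : u ⊔ v ≤ y := sup_le hu.1.le hv.1.le
  rcases eq_or_lt_of_le h2 with h | h
  · exact h
  · exact absurd h (hu.2 h1)

lemma mem_Icc_lowstar {y w : L} {m : L} (hm : m ⋖ y) (h1 : lowstar y ≤ w) (h2 : w ≤ y) :
    w ∈ Set.Icc (lowstar y) y := ⟨h1, h2⟩

lemma covby_inf (hMD : MeetDistrib L) {u v y : L} (hu : u ⋖ y) (hv : v ⋖ y) (huv : u ≠ v) :
    u ⊓ v ⋖ v := by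
  have hyb : y ≠ ⊥ := fun h => by simp [h] at hu
  have hvu : ¬ v ≤ u := covby_not_le hu hv huv
  have hlt : u ⊓ v < v := inf_lt_right.2 hvu
  refine ⟨hlt, fun w hw hwv => ?_⟩
  have hls : lowstar y ≤ u ⊓ v := le_inf (lowstar_le hu) (lowstar_le hv)
  have hwI : w ∈ Set.Icc (lowstar y) y := ⟨hls.trans hw.le, hwv.le.trans hv.1.le⟩
  have huI : u ∈ Set.Icc (lowstar y) y := ⟨lowstar_le hu, hu.1.le⟩
  have hvI : v ∈ Set.Icc (lowstar y) y := ⟨lowstar_le hv, hv.1.le⟩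
  have hwu : ¬ w ≤ u := fun hle => absurd (le_inf hle hwv.le) (not_le_of_gt hw)
  have hsup : u ⊔ w = y := by
    have h1 : u < u ⊔ w := left_lt_sup.2 hwu
    have h2 : u ⊔ w ≤ y := sup_le hu.1.le (hwI.2)
    rcases eq_or_lt_of_le h2 with h | h
    · exact h
    · exact absurd h (hu.2 h1)
  have := hMD y hyb v hvI u huI w hwI
  rw [hsup, inf_eq_left.2 hv.1.le, inf_comm v w, inf_eq_left.2 hwv.le] at this
  -- this : v = (v ⊓ u) ⊔ w
  have : v = w := by
    rw [this, inf_comm v u, sup_eq_right.2 hw.le]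
  exact absurd this.symm (ne_of_lt hwv)

/-- At most one lower cover of `y` fails to be above a given sup-irreducible `p ≤ y`. -/
lemma si_le_or_le (hMD : MeetDistrib L) :
    ∀ y m m' : L, m ⋖ y → m' ⋖ y → m ≠ m' → ∀ p, SupIrred p → p ≤ y → p ≤ m ∨ p ≤ m' := by
  have main : ∀ y : L, (∀ z : L, z < y → ∀ m m' : L, m ⋖ z → m' ⋖ z → m ≠ m' →
      ∀ p, SupIrred p → p ≤ z → p ≤ m ∨ p ≤ m') → ∀ m m' : L, m ⋖ y → m' ⋖ y → m ≠ m' →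
      ∀ p, SupIrred p → p ≤ y → p ≤ m ∨ p ≤ m' := by
    intro y IH m m' hm hm' hne p hp hpy
    by_contra hcon
    push_neg at hcon
    obtain ⟨hpm, hpm'⟩ := hcon
    have hyb : y ≠ ⊥ := fun h => by subst h; exact absurd hm.1 not_lt_bot
    rcases eq_or_lt_of_le hpy with rfl | hlt
    · rcases hp.2 (covby_sup_eq hm hm' hne) with h | h
      · exact absurd h.symm.le hpm
      · exact absurd h.symm.le hpm'
    · obtain ⟨m'', hpm'', hm''⟩ := exists_le_covby hlt
      have hne1 : m'' ≠ m := fun h => hpm (h ▸ hpm'')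
      have hne2 : m'' ≠ m' := fun h => hpm' (h ▸ hpm'')
      have hc1 : m'' ⊓ m ⋖ m'' := by
        have := covby_inf hMD hm hm'' (Ne.symm hne1); rwa [inf_comm] at this
      have hc2 : m'' ⊓ m' ⋖ m'' := by
        have := covby_inf hMD hm' hm'' (Ne.symm hne2); rwa [inf_comm] at this
      have hneq : m'' ⊓ m ≠ m'' ⊓ m' := by
        intro heq
        have hI : ∀ w : L, w ⋖ y → w ∈ Set.Icc (lowstar y) y :=
          fun w hw => ⟨lowstar_le hw, hw.1.le⟩
        have := hMD y hyb m'' (hI _ hm'') m (hI _ hm) m' (hI _ hm')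
        rw [covby_sup_eq hm hm' hne, inf_eq_left.2 hm''.1.le, ← heq, sup_idem] at this
        -- this : m'' = m'' ⊓ m
        have : m'' ≤ m := by rw [this]; exact inf_le_right
        rcases eq_or_lt_of_le this with h | h
        · exact hne1 h
        · exact hm''.2 h hm.1
      rcases IH m'' hm''.1 (m'' ⊓ m) (m'' ⊓ m') hc1 hc2 hneq p hp hpm'' with h | h
      · exact hpm (h.trans inf_le_right)
      · exact hpm' (h.trans inf_le_right)
  exact fun y => wellFounded_lt.induction y main

/-- Main lemma: given a lower cover `m ⋖ y`, there is at most one sup-irreducible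
`p ≤ y` with `p ≰ m`. -/
lemma si_unique (hMD : MeetDistrib L) :
    ∀ y m : L, m ⋖ y → ∀ p q, SupIrred p → SupIrred q → p ≤ y → q ≤ y →
      ¬ p ≤ m → ¬ q ≤ m → p = q := by
  have main : ∀ y : L, (∀ z : L, z < y → ∀ m : L, m ⋖ z → ∀ p q, SupIrred p → SupIrred q →
      p ≤ z → q ≤ z → ¬ p ≤ m → ¬ q ≤ m → p = q) → ∀ m : L, m ⋖ y → ∀ p q, SupIrred p →
      SupIrred q → p ≤ y → q ≤ y → ¬ p ≤ m → ¬ q ≤ m → p = q := by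
    intro y IH m hm p q hp hq hpy hqy hpm hqm
    rcases eq_or_lt_of_le hpy with rfl | hplt
    · rcases eq_or_lt_of_le hqy with rfl | hqlt
      · rfl
      · obtain ⟨m'', hqm'', hm''⟩ := exists_le_covby hqlt
        have hne : m ≠ m'' := fun h => hqm (h ▸ hqm'')
        rcases si_le_or_le hMD p m m'' hm hm'' hne p hp le_rfl with h | h
        · exact absurd h hpm
        · exact absurd (hm''.1.trans_le h) (lt_irrefl _)
    · rcases eq_or_lt_of_le hqy with rfl | hqlt
      · obtain ⟨m'', hpm'', hm''⟩ := exists_le_covby hplt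
        have hne : m ≠ m'' := fun h => hpm (h ▸ hpm'')
        rcases si_le_or_le hMD q m m'' hm hm'' hne q hq le_rfl with h | h
        · exact absurd h hqm
        · exact absurd (hm''.1.trans_le h) (lt_irrefl _)
      · obtain ⟨m₁, hpm₁, hm₁⟩ := exists_le_covby hplt
        have hne₁ : m ≠ m₁ := fun h => hpm (h ▸ hpm₁)
        have hqm₁ : q ≤ m₁ := by
          rcases si_le_or_le hMD y m m₁ hm hm₁ hne₁ q hq hqy with h | h
          · exact absurd h hqm
          · exact h
        have hc : m ⊓ m₁ ⋖ m₁ := covby_inf hMD hm hm₁ hne₁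
        exact IH m₁ hm₁.1 (m ⊓ m₁) hc p q hp hq hpm₁ hqm₁
          (fun h => hpm (h.trans inf_le_left)) (fun h => hqm (h.trans inf_le_left))
  exact fun y => wellFounded_lt.induction y main

noncomputable def JF (y : L) : Finset L := Finset.univ.filter fun p => SupIrred p ∧ p ≤ y

lemma mem_JF {y p : L} : p ∈ JF y ↔ SupIrred p ∧ p ≤ y := by simp [JF]

noncomputable def supLen (S : Set L) : ℕ :=
  ((Finset.univ.powerset.filter
      fun C : Finset L => ↑C ⊆ S ∧ IsChain (· ≤ ·) (C : Set L)).sup Finset.card)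

lemma chainLen_eq (S : Set L) : chainLen S = supLen S - 1 := rfl

lemma le_supLen {S : Set L} {C : Finset L} (h1 : ↑C ⊆ S) (h2 : IsChain (· ≤ ·) (C : Set L)) :
    C.card ≤ supLen S :=
  Finset.le_sup (by simp [Finset.mem_filter, h1, h2])

lemma supLen_exists (S : Set L) : ∃ C : Finset L, ↑C ⊆ S ∧ IsChain (· ≤ ·) (C : Set L) ∧
    C.card = supLen S := by
  obtain ⟨C, hC, hcard⟩ := Finset.exists_mem_eq_sup
    (Finset.univ.powerset.filter
      fun C : Finset L => ↑C ⊆ S ∧ IsChain (· ≤ ·) (C : Set L))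
    ⟨∅, by simp⟩ Finset.card
  simp only [Finset.mem_filter] at hC
  exact ⟨C, hC.2.1, hC.2.2, hcard.symm⟩

lemma chainLen_lt {m y : L} (h : m < y) : chainLen (Set.Iic m) + 1 ≤ chainLen (Set.Iic y) := by
  obtain ⟨C, hCsub, hCchain, hCcard⟩ := supLen_exists (Set.Iic m)
  have hs1 : 1 ≤ supLen (Set.Iic m) := by
    have : ({m} : Finset L).card ≤ supLen (Set.Iic m) :=
      le_supLen (by simp) (by simp [Set.subsingleton_singleton.isChain])
    simpa using this
  have hyC : y ∉ C := fun hy => absurd (hCsub hy) (not_le_of_gt h)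
  have hins : (insert y C).card ≤ supLen (Set.Iic y) := by
    refine le_supLen ?_ ?_
    · intro x hx
      simp only [Finset.coe_insert, Set.mem_insert_iff] at hx
      rcases hx with rfl | hx
      · exact Set.mem_Iic.2 le_rfl
      · exact Set.mem_Iic.2 ((hCsub hx).trans h.le)
    · rw [Finset.coe_insert]
      exact hCchain.insert (fun b hb _ => Or.inr ((hCsub hb).trans h.le))
  rw [Finset.card_insert_of_notMem hyC, hCcard] at hins
  rw [chainLen_eq, chainLen_eq]
  omega

lemma exists_supIrred : ∀ y : L, ∀ x, x < y → ∃ p, SupIrred p ∧ p ≤ y ∧ ¬ p ≤ x := by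
  have main : ∀ y : L, (∀ z : L, z < y → ∀ x, x < z → ∃ p, SupIrred p ∧ p ≤ z ∧ ¬ p ≤ x) →
      ∀ x, x < y → ∃ p, SupIrred p ∧ p ≤ y ∧ ¬ p ≤ x := by
    intro y IH x hxy
    by_cases hy : SupIrred y
    · exact ⟨y, hy, le_rfl, not_le_of_gt hxy⟩
    · rw [SupIrred] at hy
      push_neg at hy
      have hnm : ¬ IsMin y := fun h => absurd (h hxy.le) (not_le_of_gt hxy)
      obtain ⟨b, c, hbc, hb, hc⟩ := hy hnm
      have hby : b < y := lt_of_le_of_ne (hbc ▸ le_sup_left) hb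
      have hcy : c < y := lt_of_le_of_ne (hbc ▸ le_sup_right) hc
      by_cases hbx : b ≤ x
      · have hcx : ¬ c ≤ x := fun hcx => absurd (hbc ▸ sup_le hbx hcx) (not_le_of_gt hxy)
        obtain ⟨p, hp, hpc, hpx⟩ := IH c hcy (x ⊓ c) (inf_lt_right.2 hcx)
        exact ⟨p, hp, hpc.trans hcy.le, fun h => hpx (le_inf h hpc)⟩
      · obtain ⟨p, hp, hpb, hpx⟩ := IH b hby (x ⊓ b) (inf_lt_right.2 hbx)
        exact ⟨p, hp, hpb.trans hby.le, fun h => hpx (le_inf h hpb)⟩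
  exact fun y => wellFounded_lt.induction y main

lemma JF_card_le (hMD : MeetDistrib L) : ∀ y : L, (JF y).card ≤ chainLen (Set.Iic y) := by
  have main : ∀ y : L, (∀ z : L, z < y → (JF z).card ≤ chainLen (Set.Iic z)) →
      (JF y).card ≤ chainLen (Set.Iic y) := by
    intro y IH
    by_cases hy : ∃ m, m ⋖ y
    · obtain ⟨m, hm⟩ := hy
      have hE : ((JF y) \ (JF m)).card ≤ 1 := by
        refine Finset.card_le_one.2 (fun p hp q hq => ?_)
        simp only [Finset.mem_sdiff, mem_JF] at hp hq
        have hpm : ¬ p ≤ m := fun h => hp.2 ⟨hp.1.1, h⟩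
        have hqm : ¬ q ≤ m := fun h => hq.2 ⟨hq.1.1, h⟩
        exact si_unique hMD y m hm p q hp.1.1 hq.1.1 hp.1.2 hq.1.2 hpm hqm
      have hsub : JF y ⊆ JF m ∪ ((JF y) \ (JF m)) := by
        intro p hp
        by_cases h : p ∈ JF m
        · exact Finset.mem_union_left _ h
        · exact Finset.mem_union_right _ (Finset.mem_sdiff.2 ⟨hp, h⟩)
      calc (JF y).card ≤ (JF m ∪ ((JF y) \ (JF m))).card := Finset.card_le_card hsub
        _ ≤ (JF m).card + ((JF y) \ (JF m)).card := Finset.card_union_le _ _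
        _ ≤ (JF m).card + 1 := by omega
        _ ≤ chainLen (Set.Iic m) + 1 := by have := IH m hm.1; omega
        _ ≤ chainLen (Set.Iic y) := chainLen_lt hm.1
    · have hmin : IsMin y := by
        intro b hb
        by_contra hyb
        have : b < y := lt_of_le_of_ne hb (fun h => hyb (h ▸ le_rfl))
        obtain ⟨m, _, hm⟩ := exists_le_covby this
        exact hy ⟨m, hm⟩
      have : JF y = ∅ := by
        refine Finset.eq_empty_of_forall_notMem (fun p hp => ?_)
        rw [mem_JF] at hp
        exact hp.1.1 (hmin.mono hp.2)
      simp [this]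
  exact fun y => wellFounded_lt.induction y main

lemma chainLen_le_JF : ∀ b : L, chainLen (Set.Iic b) ≤ (JF b).card := by
  have key : ∀ n : ℕ, ∀ b : L, ∀ C : Finset L, C.card = n → ↑C ⊆ Set.Iic b →
      IsChain (· ≤ ·) (C : Set L) → C.card ≤ (JF b).card + 1 := by
    intro n
    induction n with
    | zero => intro b C hc _ _; omega
    | succ n IHn =>
      intro b C hc hsub hchain
      rcases Nat.eq_or_lt_of_le (Nat.one_le_iff_ne_zero.2 (by omega : n + 1 ≠ 0)) with h1 | h2
      · omega
      · -- card ≥ 2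
        have hmaxgen : ∀ (D : Finset L), D.Nonempty → IsChain (· ≤ ·) (D : Set L) →
            ∃ x ∈ D, ∀ z ∈ D, z ≤ x := by
          intro D hD hDc
          obtain ⟨x, hxD, hxmax⟩ := Set.Finite.exists_maximalFor id (↑D : Set L)
            (Set.toFinite _) (by exact_mod_cast hD)
          refine ⟨x, by exact_mod_cast hxD, fun z hz => ?_⟩
          rcases eq_or_ne z x with rfl | hne
          · exact le_rfl
          · rcases hDc (by exact_mod_cast hz) hxD hne with h | h
            · exact h
            · exact hxmax (by exact_mod_cast hz) h
        have hCne : C.Nonempty := Finset.card_pos.1 (by omega)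
        obtain ⟨x, hxC, hxmax⟩ := hmaxgen C hCne hchain
        set C' := C.erase x with hC'def
        have hC'card : C'.card = n := by rw [hC'def, Finset.card_erase_of_mem hxC, hc]; omega
        have hC'ne : C'.Nonempty := Finset.card_pos.1 (by omega)
        have hC'chain : IsChain (· ≤ ·) (C' : Set L) :=
          hchain.mono (by rw [hC'def]; exact_mod_cast Finset.erase_subset x C)
        obtain ⟨x', hx'C', hx'max⟩ := hmaxgen C' hC'ne hC'chain
        have hx'C : x' ∈ C := Finset.mem_of_mem_erase hx'C'
        have hx'x : x' < x :=
          lt_of_le_of_ne (hxmax x' hx'C) (Finset.ne_of_mem_erase hx'C')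
        have hC'sub : ↑C' ⊆ Set.Iic x' := fun z hz =>
          Set.mem_Iic.2 (hx'max z (by exact_mod_cast hz))
        have hIH := IHn x' C' hC'card hC'sub hC'chain
        obtain ⟨p, hp, hpx, hpx'⟩ := exists_supIrred x x' hx'x
        have hpb : p ≤ b := hpx.trans (Set.mem_Iic.1 (hsub hxC))
        have hpJF : p ∉ JF x' := fun h => hpx' (mem_JF.1 h).2
        have hsubJF : insert p (JF x') ⊆ JF b := by
          intro q hq
          rcases Finset.mem_insert.1 hq with rfl | hq
          · exact mem_JF.2 ⟨hp, hpb⟩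
          · have := mem_JF.1 hq
            exact mem_JF.2 ⟨this.1, this.2.trans ((hx'x.le).trans (Set.mem_Iic.1 (hsub hxC)))⟩
        have : (JF x').card + 1 ≤ (JF b).card := by
          rw [← Finset.card_insert_of_notMem hpJF]
          exact Finset.card_le_card hsubJF
        omega
  intro b
  rw [chainLen_eq]
  have : supLen (Set.Iic b) ≤ (JF b).card + 1 := by
    refine Finset.sup_le (fun C hC => ?_)
    simp only [Finset.mem_filter] at hC
    exact key C.card b C rfl hC.2.1 hC.2.2
  omega

end Dev

theorem sum_ideal_lengths_le_length {L : Type*} [Lattice L] [Fintype L]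
    [BoundedOrder L] (hMD : MeetDistrib L) (k : ℕ) (a : Fin k → L)
    (hinc : ∀ i j, i ≠ j → ¬ a i ≤ a j)
    (hmeet : ∀ i j, i ≠ j → a i ⊓ a j = ⊥) :
    (∑ i, chainLen (Set.Iic (a i))) ≤ latLen L := by
  classical
  have hdisj : ∀ i ∈ (Finset.univ : Finset (Fin k)), ∀ j ∈ (Finset.univ : Finset (Fin k)),
      i ≠ j → Disjoint (JF (a i)) (JF (a j)) := by
    intro i _ j _ hij
    refine Finset.disjoint_left.2 (fun p hpi hpj => ?_)
    have h1 := mem_JF.1 hpi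
    have h2 := mem_JF.1 hpj
    have hpb : p ≤ ⊥ := by
      have := le_inf h1.2 h2.2
      rwa [hmeet i j hij] at this
    have : p = ⊥ := le_bot_iff.1 hpb
    exact h1.1.1 (this ▸ isMin_bot)
  calc ∑ i, chainLen (Set.Iic (a i))
      ≤ ∑ i, (JF (a i)).card := Finset.sum_le_sum (fun i _ => chainLen_le_JF (a i))
    _ = (Finset.univ.biUnion fun i => JF (a i)).card := (Finset.card_biUnion hdisj).symm
    _ ≤ (JF (⊤ : L)).card := by
        refine Finset.card_le_card (fun p hp => ?_)
        obtain ⟨i, _, hpi⟩ := Finset.mem_biUnion.1 hp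
        exact mem_JF.2 ⟨(mem_JF.1 hpi).1, le_top⟩
    _ ≤ chainLen (Set.Iic (⊤ : L)) := JF_card_le hMD ⊤
    _ = latLen L := by rw [Set.Iic_top]; rfl
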